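/- (Resolvent column inequality for nonnegative matrix semigroups.) Let λ > 0 and let M : [0, ∞) → Matrix(Fin 2, Fin 2, ℝ) be such that each entry s ↦ M(s)_{ij} is measurable and nonnegative, M satisfies the semigroup property M(s)·M(u) = M(s + u) for all s, u ≥ 0, and ∫₀^∞ e^{λs} M(s)_{ij} ds < ∞ for all i, j. For j ∈ {1, 2} define f^{(j)} ∈ ℝ² by f^{(j)}_i := ∫₀^∞ e^{λs} M(s)_{ij} ds. Then for every t ≥ 0 and every i ∈ {1, 2}: (M(t) · f^{(j)})_i ≤ e^{−λt} · f^{(j)}_i. -/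

import Mathlib

open MeasureTheory

/-- **Resolvent column inequality for nonnegative matrix semigroups.**
Let `λ > 0` and let `M : [0, ∞) → ℝ^{2×2}` have measurable, nonnegative entries, satisfy
the semigroup property `M(s) M(u) = M(s + u)` and `∫₀^∞ e^{λs} M(s)_{ij} ds < ∞` for
all `i, j`.  With `f^{(j)}_i := ∫₀^∞ e^{λs} M(s)_{ij} ds`, for every `t ≥ 0`, `j` and
`i` one has `(M(t) f^{(j)})_i ≤ e^{−λt} f^{(j)}_i`. -/
theorem resolvent_column_inequality
    (lam : ℝ) (hlam : 0 < lam)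
    (M : ℝ → Matrix (Fin 2) (Fin 2) ℝ)
    (hMmeas : ∀ i j : Fin 2, Measurable fun s => M s i j)
    (hMpos : ∀ s ∈ Set.Ici (0 : ℝ), ∀ i j : Fin 2, 0 ≤ M s i j)
    (hMsemigroup : ∀ s ∈ Set.Ici (0 : ℝ), ∀ u ∈ Set.Ici (0 : ℝ),
      M s * M u = M (s + u))
    (hMint : ∀ i j : Fin 2,
      IntegrableOn (fun s => Real.exp (lam * s) * M s i j) (Set.Ioi 0)) :
    ∀ t ∈ Set.Ici (0 : ℝ), ∀ j i : Fin 2,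
      (M t).mulVec (fun i' => ∫ s in Set.Ioi (0 : ℝ), Real.exp (lam * s) * M s i' j) i
        ≤ Real.exp (-lam * t) *
          ∫ s in Set.Ioi (0 : ℝ), Real.exp (lam * s) * M s i j := by
  intro t ht j i
  have ht' : (0:ℝ) ≤ t := ht
  -- Step 1: compute the left-hand side as a single integral
  have hms : (M t).mulVec (fun i' => ∫ s in Set.Ioi (0 : ℝ),
      Real.exp (lam * s) * M s i' j) i
      = ∫ s in Set.Ioi (0 : ℝ), Real.exp (lam * s) * M (t + s) i j := by
    have h0 : M t i 0 * (∫ s in Set.Ioi (0:ℝ), Real.exp (lam * s) * M s 0 j)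
        = ∫ s in Set.Ioi (0:ℝ), M t i 0 * (Real.exp (lam * s) * M s 0 j) :=
      (MeasureTheory.integral_const_mul _ _).symm
    have h1 : M t i 1 * (∫ s in Set.Ioi (0:ℝ), Real.exp (lam * s) * M s 1 j)
        = ∫ s in Set.Ioi (0:ℝ), M t i 1 * (Real.exp (lam * s) * M s 1 j) :=
      (MeasureTheory.integral_const_mul _ _).symm
    rw [Matrix.mulVec, dotProduct, Fin.sum_univ_two, h0, h1,
      ← integral_add (((hMint 0 j).const_mul _)) (((hMint 1 j).const_mul _))]
    refine setIntegral_congr_fun measurableSet_Ioi (fun s hs => ?_)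
    have hs' : (0:ℝ) ≤ s := le_of_lt hs
    have := hMsemigroup t ht' s hs'
    have hentry : M t i 0 * M s 0 j + M t i 1 * M s 1 j = M (t + s) i j := by
      rw [← this]
      simp [Matrix.mul_apply, Fin.sum_univ_two]
    rw [← hentry]; ring
  rw [hms]
  -- Step 2: change of variables u = t + s
  have hsub : ∫ s in Set.Ioi (0 : ℝ), Real.exp (lam * s) * M (t + s) i j
      = ∫ u in Set.Ioi t, Real.exp (lam * (u - t)) * M u i j := by
    have hemb : MeasurableEmbedding (fun x : ℝ => x + t) :=
      (Homeomorph.addRight t).measurableEmbedding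
    have hmp : MeasurePreserving (fun x : ℝ => x + t) volume volume :=
      measurePreserving_add_right volume t
    have hpre : (fun x : ℝ => x + t) ⁻¹' Set.Ioi t = Set.Ioi 0 := by
      ext x; simp [Set.mem_preimage]
    have := hmp.setIntegral_preimage_emb hemb
      (fun u => Real.exp (lam * (u - t)) * M u i j) (Set.Ioi t)
    rw [hpre] at this
    rw [← this]
    refine setIntegral_congr_fun measurableSet_Ioi (fun s hs => ?_)
    simp [add_comm s t]
  rw [hsub]
  -- Step 3: pull out the exponential factor
  have hpull : ∫ u in Set.Ioi t, Real.exp (lam * (u - t)) * M u i j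
      = Real.exp (-lam * t) * ∫ u in Set.Ioi t, Real.exp (lam * u) * M u i j := by
    rw [← MeasureTheory.integral_const_mul]
    refine setIntegral_congr_fun measurableSet_Ioi (fun u _ => ?_)
    rw [← mul_assoc, ← Real.exp_add]
    ring_nf
  rw [hpull]
  -- Step 4: monotonicity of the integral over Ioi t ⊆ Ioi 0
  have hmono : (∫ u in Set.Ioi t, Real.exp (lam * u) * M u i j)
      ≤ ∫ u in Set.Ioi (0:ℝ), Real.exp (lam * u) * M u i j := by
    refine setIntegral_mono_set (hMint i j) ?_ ?_
    · filter_upwards [ae_restrict_mem measurableSet_Ioi] with u hu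
      exact mul_nonneg (Real.exp_pos _).le (hMpos u (Set.mem_Ici.mpr (le_of_lt hu)) i j)
    · exact HasSubset.Subset.eventuallyLE (Set.Ioi_subset_Ioi ht')
  exact mul_le_mul_of_nonneg_left hmono (Real.exp_pos _).le
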